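/- arXiv:math/0505332 — 4 statements merged into one kernel-verified Lean document; each statement's English description precedes it below -/
import Mathlib

section
/- For every real ε > 0, every real x > 0 and every integer n ≥ 1: P(S_n > x) ≥ n · P(max_{0≤k≤n} |S_k| ≤ ε·x)² · P(ξ₁ > (1+2ε)·x). -/
open MeasureTheory ProbabilityTheory Filter

set_option linter.unusedSectionVars false

noncomputable section

def walk {Ω : Type*} (ξ : ℕ → Ω → ℝ) (n : ℕ) (ω : Ω) : ℝ :=
  ∑ i ∈ Finset.range n, ξ i ω


def walkMax {Ω : Type*} (ξ : ℕ → Ω → ℝ) (n : ℕ) (ω : Ω) : ℝ :=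
  (Finset.range (n + 1)).sup' Finset.nonempty_range_add_one fun k => walk ξ k ω

def walkMin {Ω : Type*} (ξ : ℕ → Ω → ℝ) (n : ℕ) (ω : Ω) : ℝ :=
  (Finset.range (n + 1)).inf' Finset.nonempty_range_add_one fun k => walk ξ k ω

def reflMax {Ω : Type*} (ξ : ℕ → Ω → ℝ) (n : ℕ) (ω : Ω) : ℝ :=
  (Finset.range (n + 1)).sup' Finset.nonempty_range_add_one fun v =>
    (Finset.range (v + 1)).sup' Finset.nonempty_range_add_one fun u =>
      walk ξ v ω - walk ξ u ω

def walkAbsMax {Ω : Type*} (ξ : ℕ → Ω → ℝ) (n : ℕ) (ω : Ω) : ℝ :=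
  (Finset.range (n + 1)).sup' Finset.nonempty_range_add_one fun k => |walk ξ k ω|

/-- padding a function on a finset to all of ℕ by 0 -/
def pad (S : Finset ℕ) (v : {x // x ∈ S} → ℝ) (i : ℕ) : ℝ :=
  if h : i ∈ S then v ⟨i, h⟩ else 0

lemma measurable_pad (S : Finset ℕ) (i : ℕ) :
    Measurable fun v : {x // x ∈ S} → ℝ => pad S v i := by
  unfold pad
  by_cases h : i ∈ S
  · simp only [dif_pos h]; exact measurable_pi_apply _
  · simp only [dif_neg h]; exact measurable_const

def padF (m : ℕ) (w : Fin m → ℝ) (i : ℕ) : ℝ :=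
  if h : i < m then w ⟨i, h⟩ else 0

lemma measurable_padF (m : ℕ) (i : ℕ) :
    Measurable fun w : Fin m → ℝ => padF m w i := by
  unfold padF
  by_cases h : i < m
  · simp only [dif_pos h]; exact measurable_pi_apply _
  · simp only [dif_neg h]; exact measurable_const

section aux

variable {Ω : Type*} [MeasurableSpace Ω] (P : Measure Ω) [IsProbabilityMeasure P]
  (ξ : ℕ → Ω → ℝ)

lemma tuple_shift_map (hmeas : ∀ i, Measurable (ξ i))
    (hindep : iIndepFun ξ P)
    (hident : ∀ i, IdentDistrib (ξ i) (ξ 0) P P) (a m : ℕ) :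
    Measure.map (fun ω (i : Fin m) => ξ (a + i) ω) P
      = Measure.pi (fun _ : Fin m => Measure.map (ξ 0) P) := by
  classical
  refine (Measure.pi_eq fun s hs => ?_).symm
  have htup : Measurable (fun ω (i : Fin m) => ξ (a + i) ω) :=
    measurable_pi_lambda _ fun i => hmeas _
  rw [Measure.map_apply htup (MeasurableSet.univ_pi hs)]
  set sets : ℕ → Set ℝ :=
    fun jj => if h : a ≤ jj ∧ jj - a < m then s ⟨jj - a, h.2⟩ else Set.univ with hsets
  have hsetseq : ∀ i : Fin m, sets (a + i) = s i := by
    intro i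
    have h : a ≤ a + ↑i ∧ a + ↑i - a < m := ⟨Nat.le_add_right _ _, by simp [i.2]⟩
    have h2 : (⟨a + ↑i - a, h.2⟩ : Fin m) = i := Fin.ext (by simp)
    rw [hsets]; simp only [dif_pos h, h2]
  set emb : ℕ ↪ ℕ := ⟨fun i => a + i, add_right_injective a⟩ with hemb
  set S : Finset ℕ := (Finset.range m).map emb with hS
  have hpre : (fun ω (i : Fin m) => ξ (a + ↑i) ω) ⁻¹' Set.pi Set.univ s
      = ⋂ jj ∈ S, ξ jj ⁻¹' sets jj := by
    ext ω
    simp only [Set.mem_preimage, Set.mem_pi, Set.mem_univ, true_implies, Set.mem_iInter,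
      Finset.mem_map, Finset.mem_range, hS, hemb, Function.Embedding.coeFn_mk]
    constructor
    · rintro h jj ⟨i, hi, rfl⟩
      exact (hsetseq ⟨i, hi⟩) ▸ h ⟨i, hi⟩
    · intro h i
      have := h (a + ↑i) ⟨↑i, i.2, rfl⟩
      rwa [hsetseq i] at this
  have hms : ∀ jj ∈ S, MeasurableSet (sets jj) := by
    intro jj _
    rw [hsets]
    by_cases h : a ≤ jj ∧ jj - a < m
    · simp only [dif_pos h]; exact hs _
    · simp only [dif_neg h]; exact MeasurableSet.univ
  rw [hpre, hindep.measure_inter_preimage_eq_mul S hms, Finset.prod_map,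
    ← Fin.prod_univ_eq_prod_range (fun i => P (ξ (emb i) ⁻¹' sets (emb i))) m]
  refine Finset.prod_congr rfl fun i _ => ?_
  have : emb ↑i = a + ↑i := rfl
  rw [this, hsetseq i, (hident (a + ↑i)).measure_mem_eq (hs i),
    Measure.map_apply (hmeas 0) (hs i)]

lemma tuple_shift_event (hmeas : ∀ i, Measurable (ξ i))
    (hindep : iIndepFun ξ P)
    (hident : ∀ i, IdentDistrib (ξ i) (ξ 0) P P) (a m : ℕ)
    (W : Set (Fin m → ℝ)) (hW : MeasurableSet W) :
    P ((fun ω (i : Fin m) => ξ (a + i) ω) ⁻¹' W)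
      = P ((fun ω (i : Fin m) => ξ (i : ℕ) ω) ⁻¹' W) := by
  have h1 := tuple_shift_map P ξ hmeas hindep hident a m
  have h2 := tuple_shift_map P ξ hmeas hindep hident 0 m
  simp only [Nat.zero_add] at h2
  have m1 : Measurable (fun ω (i : Fin m) => ξ (a + ↑i) ω) :=
    measurable_pi_lambda _ fun i => hmeas _
  have m2 : Measurable (fun ω (i : Fin m) => ξ (↑i : ℕ) ω) :=
    measurable_pi_lambda _ fun i => hmeas _
  rw [← Measure.map_apply m1 hW, ← Measure.map_apply m2 hW, h1, h2]

end aux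
lemma measurableSet_forall_abs_le {α : Type*} [MeasurableSpace α] (m : ℕ)
    (f : ℕ → α → ℝ) (hf : ∀ k, Measurable (f k)) (c : ℝ) :
    MeasurableSet {a | ∀ k ≤ m, |f k a| ≤ c} := by
  have h : {a | ∀ k ≤ m, |f k a| ≤ c} = ⋂ k, ⋂ _ : k ≤ m, {a | |f k a| ≤ c} := by
    ext a; simp
  rw [h]
  exact MeasurableSet.iInter fun k => MeasurableSet.iInter fun _ =>
    measurableSet_le (hf k).abs measurable_const

def evA {Ω : Type*} (ξ : ℕ → Ω → ℝ) (c : ℝ) (j : ℕ) : Set Ω :=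
  {ω | ∀ k ≤ j, |walk ξ k ω| ≤ c}

def evB {Ω : Type*} (ξ : ℕ → Ω → ℝ) (b : ℝ) (j : ℕ) : Set Ω :=
  {ω | b < ξ j ω}

def evC {Ω : Type*} (ξ : ℕ → Ω → ℝ) (c : ℝ) (m j : ℕ) : Set Ω :=
  {ω | ∀ k ≤ m, |∑ i ∈ Finset.range k, ξ (j + 1 + i) ω| ≤ c}

section aux2

variable {Ω : Type*} [MeasurableSpace Ω] (P : Measure Ω) [IsProbabilityMeasure P]
  (ξ : ℕ → Ω → ℝ)

omit [MeasurableSpace Ω] in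
lemma sum_pad_eq (S : Finset ℕ) (ω : Ω) (k : ℕ) (hk : ∀ i < k, i ∈ S) :
    ∑ i ∈ Finset.range k, pad S (fun i : {x // x ∈ S} => ξ ↑i ω) i = walk ξ k ω :=
  Finset.sum_congr rfl fun i hi => by
    have h := hk i (Finset.mem_range.1 hi)
    simp [pad, h]

lemma prob_AB (hmeas : ∀ i, Measurable (ξ i))
    (hindep : iIndepFun ξ P) (c b : ℝ) (j : ℕ) :
    P (evA ξ c j ∩ evB ξ b j) = P (evA ξ c j) * P (evB ξ b j) := by
  classical
  have hind := hindep.indepFun_finset (Finset.range j) {j} (by simp) hmeas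
  have hU : MeasurableSet {v : {x // x ∈ Finset.range j} → ℝ |
      ∀ k ≤ j, |∑ i ∈ Finset.range k, pad (Finset.range j) v i| ≤ c} :=
    measurableSet_forall_abs_le j _
      (fun k => Finset.measurable_sum _ fun i _ => measurable_pad _ _) c
  have hV : MeasurableSet {v : {x // x ∈ ({j} : Finset ℕ)} → ℝ |
      b < v ⟨j, Finset.mem_singleton_self j⟩} :=
    measurableSet_lt measurable_const (measurable_pi_apply _)
  have hAU : evA ξ c j = (fun ω (i : {x // x ∈ Finset.range j}) => ξ ↑i ω) ⁻¹'
      {v | ∀ k ≤ j, |∑ i ∈ Finset.range k, pad (Finset.range j) v i| ≤ c} := by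
    ext ω
    simp only [evA, Set.mem_setOf_eq, Set.mem_preimage]
    refine forall₂_congr fun k hk => ?_
    rw [sum_pad_eq ξ _ ω k fun i hi => Finset.mem_range.2 (lt_of_lt_of_le hi hk)]
  have hBV : evB ξ b j = (fun ω (i : {x // x ∈ ({j} : Finset ℕ)}) => ξ ↑i ω) ⁻¹'
      {v | b < v ⟨j, Finset.mem_singleton_self j⟩} := rfl
  rw [hAU, hBV]
  exact hind.measure_inter_preimage_eq_mul _ _ hU hV

lemma prob_ABC (hmeas : ∀ i, Measurable (ξ i))
    (hindep : iIndepFun ξ P) (c b : ℝ) (j m : ℕ) :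
    P ((evA ξ c j ∩ evB ξ b j) ∩ evC ξ c m j)
      = P (evA ξ c j ∩ evB ξ b j) * P (evC ξ c m j) := by
  classical
  set S := Finset.range (j + 1) with hS
  set T := (Finset.range m).map ⟨fun i => j + 1 + i, add_right_injective (j + 1)⟩ with hT
  have hdisj : Disjoint S T := by
    rw [Finset.disjoint_left]
    intro a haS haT
    rw [hS, Finset.mem_range] at haS
    rw [hT, Finset.mem_map] at haT
    obtain ⟨i, -, rfl⟩ := haT
    simp only [Function.Embedding.coeFn_mk] at haS
    omega
  have hind := hindep.indepFun_finset S T hdisj hmeas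
  have hjS : j ∈ S := by rw [hS, Finset.mem_range]; omega
  have hU : MeasurableSet {v : {x // x ∈ S} → ℝ |
      (∀ k ≤ j, |∑ i ∈ Finset.range k, pad S v i| ≤ c) ∧ b < pad S v j} := by
    refine MeasurableSet.inter ?_ (measurableSet_lt measurable_const (measurable_pad _ _))
    exact measurableSet_forall_abs_le j _
      (fun k => Finset.measurable_sum _ fun i _ => measurable_pad _ _) c
  have hV : MeasurableSet {w : {x // x ∈ T} → ℝ |
      ∀ k ≤ m, |∑ i ∈ Finset.range k, pad T w (j + 1 + i)| ≤ c} :=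
    measurableSet_forall_abs_le m _
      (fun k => Finset.measurable_sum _ fun i _ => measurable_pad _ _) c
  have hABU : evA ξ c j ∩ evB ξ b j = (fun ω (i : {x // x ∈ S}) => ξ ↑i ω) ⁻¹'
      {v | (∀ k ≤ j, |∑ i ∈ Finset.range k, pad S v i| ≤ c) ∧ b < pad S v j} := by
    ext ω
    simp only [evA, evB, Set.mem_inter_iff, Set.mem_setOf_eq, Set.mem_preimage]
    refine and_congr ?_ ?_
    · refine forall₂_congr fun k hk => ?_
      rw [sum_pad_eq ξ S ω k fun i hi => by rw [hS, Finset.mem_range]; omega]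
    · have : pad S (fun i : {x // x ∈ S} => ξ ↑i ω) j = ξ j ω := by simp [pad, hjS]
      rw [this]
  have hCV : evC ξ c m j = (fun ω (i : {x // x ∈ T}) => ξ ↑i ω) ⁻¹'
      {w | ∀ k ≤ m, |∑ i ∈ Finset.range k, pad T w (j + 1 + i)| ≤ c} := by
    ext ω
    simp only [evC, Set.mem_setOf_eq, Set.mem_preimage]
    refine forall₂_congr fun k hk => ?_
    have heq : ∑ i ∈ Finset.range k, pad T (fun i : {x // x ∈ T} => ξ ↑i ω) (j + 1 + i)
        = ∑ i ∈ Finset.range k, ξ (j + 1 + i) ω := by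
      refine Finset.sum_congr rfl fun i hi => ?_
      have h : j + 1 + i ∈ T := by
        rw [hT, Finset.mem_map]
        exact ⟨i, Finset.mem_range.2 (by have := Finset.mem_range.1 hi; omega), rfl⟩
      simp [pad, h]
    rw [heq]
  rw [hABU, hCV]
  exact hind.measure_inter_preimage_eq_mul _ _ hU hV

lemma prob_C (hmeas : ∀ i, Measurable (ξ i))
    (hindep : iIndepFun ξ P)
    (hident : ∀ i, IdentDistrib (ξ i) (ξ 0) P P) (c : ℝ) (j m : ℕ) :
    P (evC ξ c m j) = P {ω | ∀ k ≤ m, |walk ξ k ω| ≤ c} := by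
  have hW : MeasurableSet {w : Fin m → ℝ |
      ∀ k ≤ m, |∑ i ∈ Finset.range k, padF m w i| ≤ c} :=
    measurableSet_forall_abs_le m _
      (fun k => Finset.measurable_sum _ fun i _ => measurable_padF _ _) c
  have h1 : evC ξ c m j = (fun ω (i : Fin m) => ξ (j + 1 + ↑i) ω) ⁻¹'
      {w | ∀ k ≤ m, |∑ i ∈ Finset.range k, padF m w i| ≤ c} := by
    ext ω
    simp only [evC, Set.mem_setOf_eq, Set.mem_preimage]
    refine forall₂_congr fun k hk => ?_
    have heq : ∑ i ∈ Finset.range k, padF m (fun i : Fin m => ξ (j + 1 + ↑i) ω) i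
        = ∑ i ∈ Finset.range k, ξ (j + 1 + i) ω := by
      refine Finset.sum_congr rfl fun i hi => ?_
      have h : i < m := lt_of_lt_of_le (Finset.mem_range.1 hi) hk
      simp [padF, h]
    rw [heq]
  have h2 : (fun ω (i : Fin m) => ξ (↑i : ℕ) ω) ⁻¹'
      {w | ∀ k ≤ m, |∑ i ∈ Finset.range k, padF m w i| ≤ c}
      = {ω | ∀ k ≤ m, |walk ξ k ω| ≤ c} := by
    ext ω
    simp only [Set.mem_preimage, Set.mem_setOf_eq]
    refine forall₂_congr fun k hk => ?_
    have heq : ∑ i ∈ Finset.range k, padF m (fun i : Fin m => ξ (↑i : ℕ) ω) i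
        = walk ξ k ω := by
      refine Finset.sum_congr rfl fun i hi => ?_
      have h : i < m := lt_of_lt_of_le (Finset.mem_range.1 hi) hk
      simp [padF, h]
    rw [heq]
  rw [h1, tuple_shift_event P ξ hmeas hindep hident (j + 1) m _ hW, h2]

end aux2
/-- For every `ε > 0`, `x > 0` and `n ≥ 1`:
`P(S_n > x) ≥ n ⬝ P(max_{0≤k≤n} |S_k| ≤ ε x)² ⬝ P(ξ₁ > (1+2ε) x)`. -/
theorem walk_tail_lower_bound
    {Ω : Type*} [MeasurableSpace Ω] (P : Measure Ω) [IsProbabilityMeasure P]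
    (ξ : ℕ → Ω → ℝ) (hmeas : ∀ i, Measurable (ξ i))
    (hindep : iIndepFun ξ P)
    (hident : ∀ i, IdentDistrib (ξ i) (ξ 0) P P)
    (ε x : ℝ) (hε : 0 < ε) (hx : 0 < x) (n : ℕ) (hn : 1 ≤ n) :
    (n : ℝ) * (P {ω | walkAbsMax ξ n ω ≤ ε * x}).toReal ^ 2
        * (P {ω | (1 + 2 * ε) * x < ξ 0 ω}).toReal
      ≤ (P {ω | x < walk ξ n ω}).toReal := by
  classical
  set c := ε * x with hc
  set b := (1 + 2 * ε) * x with hb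
  set E : ℕ → Set Ω := fun j => (evA ξ c j ∩ evB ξ b j) ∩ evC ξ c (n - j - 1) j with hE
  set p := P {ω | walkAbsMax ξ n ω ≤ c} with hp
  set q := P {ω | b < ξ 0 ω} with hq
  have hwalkm : ∀ k, Measurable (walk ξ k) := fun k =>
    Finset.measurable_sum _ fun i _ => hmeas i
  have habs : ∀ ω, walkAbsMax ξ n ω ≤ c ↔ ∀ k ≤ n, |walk ξ k ω| ≤ c := by
    intro ω
    rw [walkAbsMax, Finset.sup'_le_iff]
    constructor
    · intro h k hk
      exact h k (Finset.mem_range.2 (by omega))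
    · intro h k hk
      exact h k (by have := Finset.mem_range.1 hk; omega)
  have hAmeas : ∀ j, MeasurableSet (evA ξ c j) := fun j =>
    measurableSet_forall_abs_le j (fun k => walk ξ k) hwalkm c
  have hBmeas : ∀ j, MeasurableSet (evB ξ b j) := fun j =>
    measurableSet_lt measurable_const (hmeas j)
  have hCmeas : ∀ j m, MeasurableSet (evC ξ c m j) := fun j m =>
    measurableSet_forall_abs_le m _
      (fun k => Finset.measurable_sum _ fun i _ => hmeas _) c
  have hEmeas : ∀ j, MeasurableSet (E j) := fun j =>
    ((hAmeas j).inter (hBmeas j)).inter (hCmeas j _)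
  have hexp : b = x + 2 * c := by rw [hb, hc]; ring
  have hcpos : 0 < c := mul_pos hε hx
  have hsub : ∀ j < n, E j ⊆ {ω | x < walk ξ n ω} := by
    intro j hj ω hω
    obtain ⟨⟨hA, hB⟩, hC⟩ := hω
    have h1 := abs_le.1 (hA j le_rfl)
    have h3 := abs_le.1 (hC (n - j - 1) le_rfl)
    have hdec : walk ξ n ω
        = walk ξ j ω + ξ j ω + ∑ i ∈ Finset.range (n - j - 1), ξ (j + 1 + i) ω := by
      have h := Finset.sum_range_add (fun i => ξ i ω) (j + 1) (n - j - 1)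
      rw [Finset.sum_range_succ, show j + 1 + (n - j - 1) = n by omega] at h
      simpa [walk] using h
    show x < walk ξ n ω
    rw [hdec]
    rw [hexp] at hB
    have hB' : x + 2 * c < ξ j ω := hB
    linarith [h1.1, h3.1]
  have hdisj2 : ∀ j j' : ℕ, j < j' → Disjoint (E j) (E j') := by
    intro j j' hlt
    rw [Set.disjoint_left]
    rintro ω ⟨⟨hA, hB⟩, -⟩ ⟨⟨hA', -⟩, -⟩
    have h1 := abs_le.1 (hA j le_rfl)
    have h2 := abs_le.1 (hA' (j + 1) hlt)
    have hstep : walk ξ (j + 1) ω = walk ξ j ω + ξ j ω := by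
      simp [walk, Finset.sum_range_succ]
    have h2' : walk ξ j ω + ξ j ω ≤ c := hstep ▸ h2.2
    rw [hexp] at hB
    have hB' : x + 2 * c < ξ j ω := hB
    linarith [h1.1]
  have hdisjP : (↑(Finset.range n) : Set ℕ).PairwiseDisjoint E := by
    intro j _ j' _ hne
    rcases lt_or_gt_of_ne hne with h | h
    · exact hdisj2 j j' h
    · exact (hdisj2 j' j h).symm
  have hAp : ∀ j < n, p ≤ P (evA ξ c j) := by
    intro j hj
    refine measure_mono fun ω hω => ?_
    intro k hk
    exact (habs ω).1 hω k (by omega)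
  have hCp : ∀ j < n, p ≤ P (evC ξ c (n - j - 1) j) := by
    intro j hj
    rw [prob_C P ξ hmeas hindep hident c j (n - j - 1)]
    refine measure_mono fun ω hω => ?_
    intro k hk
    exact (habs ω).1 hω k (by omega)
  have hBq : ∀ j, P (evB ξ b j) = q := by
    intro j
    have h : evB ξ b j = ξ j ⁻¹' Set.Ioi b := rfl
    rw [h, (hident j).measure_mem_eq measurableSet_Ioi]
    rfl
  have hEj : ∀ j < n, p * q * p ≤ P (E j) := by
    intro j hj
    have hval : P (E j) = P (evA ξ c j) * P (evB ξ b j) * P (evC ξ c (n - j - 1) j) := by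
      rw [hE]
      dsimp only
      rw [prob_ABC P ξ hmeas hindep c b j (n - j - 1), prob_AB P ξ hmeas hindep c b j]
    rw [hval]
    refine mul_le_mul' (mul_le_mul' (hAp j hj) (hBq j).ge) (hCp j hj)
  have hsum : (n : ENNReal) * (p * q * p) ≤ P {ω | x < walk ξ n ω} := by
    calc (n : ENNReal) * (p * q * p) = ∑ _ ∈ Finset.range n, (p * q * p) := by
          simp [Finset.sum_const, mul_comm]
      _ ≤ ∑ j ∈ Finset.range n, P (E j) :=
          Finset.sum_le_sum fun j hj => hEj j (Finset.mem_range.1 hj)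
      _ = P (⋃ j ∈ Finset.range n, E j) :=
          (measure_biUnion_finset hdisjP fun j _ => hEmeas j).symm
      _ ≤ P {ω | x < walk ξ n ω} := by
          refine measure_mono ?_
          intro ω hω
          simp only [Set.mem_iUnion] at hω
          obtain ⟨j, hj, hcc⟩ := hω
          exact hsub j (Finset.mem_range.1 hj) hcc
  have hmono := ENNReal.toReal_mono (measure_ne_top P _) hsum
  have hL : ((n : ENNReal) * (p * q * p)).toReal = (n : ℝ) * p.toReal ^ 2 * q.toReal := by
    rw [ENNReal.toReal_mul, ENNReal.toReal_mul, ENNReal.toReal_mul, ENNReal.toReal_natCast]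
    ring
  rw [hL] at hmono
  exact hmono
end
end

section
/- Let a : [1,∞) → [1,∞) be a continuous, strictly increasing, unbounded function with a(1) = 1 whose inverse a⁻¹ is regularly varying at infinity with index α > 0, and let g : [1,∞) → (0,∞) be a nondecreasing function which is regularly varying at infinity with index q ∈ (0,1]. For x > 0 and y > 0 let Λ(x,y) denote the event that the walk (S_k)_{k≥0} enters (y,∞) strictly before it enters (−∞,−x). Assume: (i) there exist a constant C₁ and thresholds x₀ ≥ 1, r₀ ≥ 1 such that for all x ≥ x₀ and all y with y/x ≥ r₀: P(Λ(x,y)) ≤ C₁·g(a⁻¹(x))/g(a⁻¹(x+y)); (ii) there exist a constant K > 0 and thresholds z₀ ≥ 1, s₀ ≥ 1 such that for every real z ≥ z₀ and every integer n with n/a⁻¹(z) ≥ s₀: P(V^#_n ≤ z) ≤ exp(−K·n/a⁻¹(z)). Then for every δ with 0 < δ < q there is a constant C_δ such that for all integers n ≥ 1 and all reals x ≥ 1: P(min_{0≤k≤n} S_k ≥ −x) ≤ C_δ·(a⁻¹(x)/n)^δ. -/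
open MeasureTheory ProbabilityTheory Filter

noncomputable section

/-- `Λ(x,y)`: the walk enters `(y,∞)` strictly before it enters `(-∞,-x)`. -/
def hitsAboveBeforeBelow {Ω : Type*} (ξ : ℕ → Ω → ℝ) (x y : ℝ) : Set Ω :=
  {ω | ∃ k : ℕ, y < walk ξ k ω ∧ ∀ j ≤ k, -x ≤ walk ξ j ω}

/-- If the walk stays above `-x` up to time `n` then either it exceeds `y` before going
below `-x`, or the reflected maximum is at most `x + y`. -/
lemma aux_incl {Ω : Type*} (ξ : ℕ → Ω → ℝ) (n : ℕ) (x y : ℝ) :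
    {ω | -x ≤ walkMin ξ n ω} ⊆
      hitsAboveBeforeBelow ξ x y ∪ {ω | reflMax ξ n ω ≤ x + y} := by
  intro ω hω
  simp only [Set.mem_setOf_eq] at hω
  have hmin : ∀ j ≤ n, -x ≤ walk ξ j ω := by
    intro j hj
    exact le_trans hω (Finset.inf'_le _ (Finset.mem_range.2 (Nat.lt_succ_of_le hj)))
  by_cases h : ∃ k ≤ n, y < walk ξ k ω
  · left
    obtain ⟨k, hk, hyk⟩ := h
    exact ⟨k, hyk, fun j hj => hmin j (le_trans hj hk)⟩
  · right
    push_neg at h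
    simp only [Set.mem_setOf_eq, reflMax]
    apply Finset.sup'_le
    intro v hv
    apply Finset.sup'_le
    intro u hu
    have hv' : v ≤ n := Nat.lt_succ_iff.1 (Finset.mem_range.1 hv)
    have hu' : u ≤ v := Nat.lt_succ_iff.1 (Finset.mem_range.1 hu)
    have h1 : walk ξ v ω ≤ y := h v hv'
    have h2 : -x ≤ walk ξ u ω := hmin u (le_trans hu' hv')
    linarith

/-- Potter-type bound for a nondecreasing regularly varying function. -/
lemma aux_potter (g : ℝ → ℝ) (q : ℝ)
    (hg_pos : ∀ x : ℝ, 1 ≤ x → 0 < g x)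
    (hg_mono : ∀ x y : ℝ, 1 ≤ x → x ≤ y → g x ≤ g y)
    (hg2 : Tendsto (fun x : ℝ => g (2 * x) / g x) atTop (nhds (2 ^ q)))
    (δ' : ℝ) (hδ'0 : 0 < δ') (hδ' : δ' < q) :
    ∃ X₁ : ℝ, 1 ≤ X₁ ∧ ∀ u v : ℝ, X₁ ≤ u → u ≤ v →
      g u ≤ 2 ^ δ' * (u / v) ^ δ' * g v := by
  have h2 : (2:ℝ) ^ δ' < 2 ^ q := (Real.rpow_lt_rpow_left_iff one_lt_two).2 hδ'
  have hev : ∀ᶠ x : ℝ in atTop, 2 ^ δ' < g (2 * x) / g x :=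
    hg2.eventually_const_lt h2
  obtain ⟨X₁, hX₁⟩ := (hev.and (eventually_ge_atTop 1)).exists_forall_of_atTop
  refine ⟨max X₁ 1, le_max_right _ _, ?_⟩
  have hkey : ∀ x : ℝ, max X₁ 1 ≤ x → 2 ^ δ' * g x ≤ g (2 * x) := by
    intro x hx
    have h1x : (1:ℝ) ≤ x := le_trans (le_max_right _ _) hx
    have := (hX₁ x (le_trans (le_max_left _ _) hx)).1
    have hgx : 0 < g x := hg_pos x h1x
    rw [lt_div_iff₀ hgx] at this
    exact this.le
  have hiter : ∀ k : ℕ, ∀ x : ℝ, max X₁ 1 ≤ x →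
      ((2:ℝ) ^ δ') ^ k * g x ≤ g (2 ^ k * x) := by
    intro k
    induction k with
    | zero => intro x hx; simp
    | succ k ih =>
      intro x hx
      have h1x : (1:ℝ) ≤ x := le_trans (le_max_right _ _) hx
      have h2k : (1:ℝ) ≤ 2 ^ k := one_le_pow₀ one_le_two
      have hx2k : max X₁ 1 ≤ 2 ^ k * x :=
        le_trans hx (le_mul_of_one_le_left (by linarith) h2k)
      calc ((2:ℝ) ^ δ') ^ (k+1) * g x = 2 ^ δ' * (((2:ℝ) ^ δ') ^ k * g x) := by ring
      _ ≤ 2 ^ δ' * g (2 ^ k * x) := by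
          have := ih x hx
          have hpos : (0:ℝ) < 2 ^ δ' := Real.rpow_pos_of_pos two_pos δ'
          nlinarith
      _ ≤ g (2 * (2 ^ k * x)) := hkey _ hx2k
      _ = g (2 ^ (k+1) * x) := by ring_nf
  intro u v hu huv
  have h1u : (1:ℝ) ≤ u := le_trans (le_max_right _ _) hu
  have hupos : (0:ℝ) < u := by linarith
  have hvpos : (0:ℝ) < v := lt_of_lt_of_le hupos huv
  set s : ℝ := Real.logb 2 (v / u) with hs
  have hvu1 : (1:ℝ) ≤ v / u := (one_le_div hupos).2 huv
  have hs0 : 0 ≤ s := Real.logb_nonneg one_lt_two hvu1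
  set k : ℕ := ⌊s⌋₊ with hk
  have h2s : (2:ℝ) ^ s = v / u := Real.rpow_logb two_pos (by norm_num) (by positivity)
  have hks : (k:ℝ) ≤ s := Nat.floor_le hs0
  have hsk1 : s < k + 1 := Nat.lt_floor_add_one s
  have h2k_le : (2:ℝ) ^ (k:ℝ) ≤ v / u := by
    rw [← h2s]; exact Real.rpow_le_rpow_of_exponent_le one_le_two hks
  have h2k_gt : v / u < 2 * 2 ^ (k:ℝ) := by
    rw [← h2s]
    calc (2:ℝ) ^ s < 2 ^ ((k:ℝ) + 1) := Real.rpow_lt_rpow_of_exponent_lt one_lt_two hsk1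
    _ = 2 * 2 ^ (k:ℝ) := by
        rw [Real.rpow_add two_pos, Real.rpow_one]; ring
  have hpow_eq : (2:ℝ) ^ (k:ℝ) = 2 ^ k := Real.rpow_natCast 2 k
  have h2k_le' : (2:ℝ) ^ k * u ≤ v := by
    rw [← hpow_eq]
    calc (2:ℝ) ^ (k:ℝ) * u ≤ (v / u) * u := by
          have := mul_le_mul_of_nonneg_right h2k_le hupos.le
          linarith
    _ = v := by field_simp
  have h1 : ((2:ℝ) ^ δ') ^ k * g u ≤ g v := by
    refine le_trans (hiter k u hu) (hg_mono _ _ ?_ h2k_le')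
    have h2k1 : (1:ℝ) ≤ 2 ^ k := one_le_pow₀ one_le_two
    nlinarith
  have heq : ((2:ℝ) ^ δ') ^ k = ((2:ℝ) ^ (k:ℝ)) ^ δ' := by
    rw [← Real.rpow_natCast ((2:ℝ) ^ δ') k, ← Real.rpow_mul (by norm_num),
      mul_comm, Real.rpow_mul (by norm_num)]
  have h2 : (v / (2 * u)) ^ δ' ≤ ((2:ℝ) ^ (k:ℝ)) ^ δ' := by
    apply Real.rpow_le_rpow (by positivity) _ hδ'0.le
    rw [div_le_iff₀ (by positivity)]
    calc v = (v / u) * u := by field_simp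
    _ ≤ (2 * 2 ^ (k:ℝ)) * u := mul_le_mul_of_nonneg_right h2k_gt.le hupos.le
    _ = 2 ^ (k:ℝ) * (2 * u) := by ring
  have hA : (0:ℝ) < (v / (2 * u)) ^ δ' := Real.rpow_pos_of_pos (by positivity) δ'
  have h3 : (v / (2 * u)) ^ δ' * g u ≤ g v := by
    have hgu : 0 ≤ g u := (hg_pos u h1u).le
    calc (v / (2 * u)) ^ δ' * g u ≤ ((2:ℝ) ^ (k:ℝ)) ^ δ' * g u :=
          mul_le_mul_of_nonneg_right h2 hgu
    _ = ((2:ℝ) ^ δ') ^ k * g u := by rw [heq]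
    _ ≤ g v := h1
  have hrw : 2 ^ δ' * (u / v) ^ δ' = ((v / (2 * u)) ^ δ')⁻¹ := by
    rw [← Real.mul_rpow (by norm_num) (by positivity), ← Real.inv_rpow (by positivity)]
    congr 1
    field_simp
  rw [hrw]
  rw [← inv_mul_cancel_left₀ hA.ne' (g u)]
  exact mul_le_mul_of_nonneg_left h3 (by positivity)

/-- A ratio bound for a monotone function with a regularly varying ratio. -/
lemma aux_rv_const (f : ℝ → ℝ) (c C0 : ℝ) (hc : 1 ≤ c)
    (hf1 : ∀ y : ℝ, 1 ≤ y → 1 ≤ f y)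
    (hfmono : ∀ y z : ℝ, 1 ≤ y → y ≤ z → f y ≤ f z)
    (hrv : Tendsto (fun x : ℝ => f (c * x) / f x) atTop (nhds C0)) :
    ∃ C : ℝ, 1 ≤ C ∧ ∀ x : ℝ, 1 ≤ x → f (c * x) ≤ C * f x := by
  have hev : ∀ᶠ x : ℝ in atTop, f (c * x) / f x < C0 + 1 :=
    hrv.eventually_lt_const (lt_add_one C0)
  obtain ⟨X, hX⟩ := (hev.and (eventually_ge_atTop 1)).exists_forall_of_atTop
  set X' := max X 1 with hX'
  refine ⟨max 1 (max (C0 + 1) (f (c * X'))), le_max_left _ _, ?_⟩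
  intro x hx
  by_cases h : X' ≤ x
  · have h1 := (hX x (le_trans (le_max_left _ _) h)).1
    have hfx : (0:ℝ) < f x := lt_of_lt_of_le one_pos (hf1 x hx)
    rw [div_lt_iff₀ hfx] at h1
    calc f (c * x) ≤ (C0 + 1) * f x := h1.le
    _ ≤ max 1 (max (C0 + 1) (f (c * X'))) * f x :=
        mul_le_mul_of_nonneg_right ((le_max_left _ _).trans (le_max_right _ _)) hfx.le
  · push_neg at h
    have hcx : c * x ≤ c * X' := mul_le_mul_of_nonneg_left h.le (by linarith)
    have h1cx : (1:ℝ) ≤ c * x := one_le_mul_of_one_le_of_one_le hc hx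
    calc f (c * x) ≤ f (c * X') := hfmono _ _ h1cx hcx
    _ = f (c * X') * 1 := by ring
    _ ≤ max 1 (max (C0 + 1) (f (c * X'))) * f x := by
        apply mul_le_mul ((le_max_right _ _).trans (le_max_right _ _)) (hf1 x hx)
          one_pos.le
        positivity

/-- `log R ≤ R^ε / ε`. -/
lemma aux_logle (ε R : ℝ) (hε : 0 < ε) (hR : 1 ≤ R) : Real.log R ≤ R ^ ε / ε := by
  have hR0 : (0:ℝ) < R := by linarith
  have h1 : Real.log (R ^ ε) = ε * Real.log R := Real.log_rpow hR0 ε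
  have h2 : Real.log (R ^ ε) ≤ R ^ ε - 1 :=
    Real.log_le_sub_one_of_pos (Real.rpow_pos_of_pos hR0 ε)
  rw [h1] at h2
  rw [le_div_iff₀ hε]
  nlinarith [Real.rpow_pos_of_pos hR0 ε]

set_option maxHeartbeats 2000000 in
/-- Let `a : [1,∞) → [1,∞)` be continuous, strictly increasing,
unbounded, `a(1) = 1`, with inverse `a⁻¹` regularly varying with index `α > 0`, and let
`g` be nondecreasing, positive and regularly varying with index `q ∈ (0,1]`.  Assume
(i) `P(Λ(x,y)) ≤ C₁ g(a⁻¹(x))/g(a⁻¹(x+y))` for `x ≥ x₀`, `y/x ≥ r₀`, and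
(ii) `P(V^#_n ≤ z) ≤ exp(-K n / a⁻¹(z))` for `z ≥ z₀`, `n / a⁻¹(z) ≥ s₀`.
Then for every `0 < δ < q` there is `C_δ` such that for all `n ≥ 1`, `x ≥ 1`:
`P(min_{0≤k≤n} S_k ≥ -x) ≤ C_δ (a⁻¹(x)/n)^δ`. -/
theorem walkMin_stay_above_bound
    {Ω : Type*} [MeasurableSpace Ω] (P : Measure Ω) [IsProbabilityMeasure P]
    (ξ : ℕ → Ω → ℝ) (hmeas : ∀ i, Measurable (ξ i))
    (hindep : iIndepFun ξ P)
    (hident : ∀ i, IdentDistrib (ξ i) (ξ 0) P P)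
    (a ainv : ℝ → ℝ) (α : ℝ) (hα : 0 < α)
    (ha_cont : ContinuousOn a (Set.Ici 1))
    (ha_mono : StrictMonoOn a (Set.Ici 1))
    (ha_top : Tendsto a atTop atTop)
    (ha_one : a 1 = 1)
    (ha_maps : ∀ x : ℝ, 1 ≤ x → 1 ≤ a x)
    (hainv_left : ∀ x : ℝ, 1 ≤ x → ainv (a x) = x)
    (hainv_right : ∀ y : ℝ, 1 ≤ y → a (ainv y) = y)
    (hainv_maps : ∀ y : ℝ, 1 ≤ y → 1 ≤ ainv y)
    (hainv_rv : ∀ l : ℝ, 0 < l →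
      Tendsto (fun x : ℝ => ainv (l * x) / ainv x) atTop (nhds (l ^ α)))
    (g : ℝ → ℝ) (q : ℝ) (hq0 : 0 < q) (hq1 : q ≤ 1)
    (hg_pos : ∀ x : ℝ, 1 ≤ x → 0 < g x)
    (hg_mono : ∀ x y : ℝ, 1 ≤ x → x ≤ y → g x ≤ g y)
    (hg_rv : ∀ l : ℝ, 0 < l →
      Tendsto (fun x : ℝ => g (l * x) / g x) atTop (nhds (l ^ q)))
    (C₁ x₀ r₀ : ℝ) (hx₀ : 1 ≤ x₀) (hr₀ : 1 ≤ r₀)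
    (hΛ : ∀ x y : ℝ, x₀ ≤ x → r₀ ≤ y / x →
      (P (hitsAboveBeforeBelow ξ x y)).toReal ≤ C₁ * g (ainv x) / g (ainv (x + y)))
    (K z₀ s₀ : ℝ) (hK : 0 < K) (hz₀ : 1 ≤ z₀) (hs₀ : 1 ≤ s₀)
    (hV : ∀ z : ℝ, z₀ ≤ z → ∀ n : ℕ, s₀ ≤ (n : ℝ) / ainv z →
      (P {ω | reflMax ξ n ω ≤ z}).toReal ≤ Real.exp (-K * n / ainv z)) :
    ∀ δ : ℝ, 0 < δ → δ < q →
      ∃ Cδ : ℝ, ∀ n : ℕ, 1 ≤ n → ∀ x : ℝ, 1 ≤ x →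
        (P {ω | -x ≤ walkMin ξ n ω}).toReal ≤ Cδ * (ainv x / n) ^ δ := by
  intro δ hδ0 hδq
  -- monotonicity of `a` and `ainv`
  have haMono : ∀ s t : ℝ, 1 ≤ s → s ≤ t → a s ≤ a t := fun s t hs hst =>
    ha_mono.monotoneOn (Set.mem_Ici.2 hs) (Set.mem_Ici.2 (hs.trans hst)) hst
  have hainvMono : ∀ y z : ℝ, 1 ≤ y → y ≤ z → ainv y ≤ ainv z := by
    intro y z hy hyz
    by_contra hcon
    push_neg at hcon
    have := ha_mono (Set.mem_Ici.2 (hainv_maps z (hy.trans hyz)))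
      (Set.mem_Ici.2 (hainv_maps y hy)) hcon
    rw [hainv_right y hy, hainv_right z (hy.trans hyz)] at this
    linarith
  -- auxiliary exponents
  set δ' : ℝ := (δ + q) / 2 with hδ'def
  have hδ'0 : 0 < δ' := by rw [hδ'def]; linarith
  have hδ'q : δ' < q := by rw [hδ'def]; linarith
  have hδδ' : δ < δ' := by rw [hδ'def]; linarith
  set ε : ℝ := (δ' - δ) / δ' with hεdef
  have hε0 : 0 < ε := by rw [hεdef]; exact div_pos (by linarith) hδ'0
  have hεδ' : ε * δ' = δ' - δ := by rw [hεdef]; field_simp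
  -- Potter bound for g
  obtain ⟨X₁, hX₁1, hPotter⟩ := aux_potter g q hg_pos hg_mono (hg_rv 2 two_pos)
    δ' hδ'0 hδ'q
  -- constants
  set A : ℝ := ainv x₀ with hAdef
  have hA1 : 1 ≤ A := hainv_maps x₀ hx₀
  set c : ℝ := (1 + r₀) * x₀ with hcdef
  have hc1 : (1:ℝ) ≤ c := by
    rw [hcdef]
    nlinarith [hr₀, hx₀]
  obtain ⟨C₃, hC₃1, hC₃⟩ := aux_rv_const ainv c (c ^ α) hc1 hainv_maps hainvMono
    (hainv_rv c (by positivity))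
  set M : ℝ := max 1 (max (ainv z₀) (max C₃ (X₁ * A))) with hMdef
  have hM1 : (1:ℝ) ≤ M := le_max_left _ _
  have hMz₀ : ainv z₀ ≤ M := le_trans (le_max_left _ _) (le_max_right _ _)
  have hMC₃ : C₃ ≤ M := le_trans (le_trans (le_max_left _ _) (le_max_right _ _))
    (le_max_right _ _)
  have hMX₁A : X₁ * A ≤ M := le_trans (le_trans (le_max_right _ _) (le_max_right _ _))
    (le_max_right _ _)
  have hM0 : (0:ℝ) < M := by linarith
  -- eventual regime threshold
  have hcK : 0 < K / (δ * M) := by positivity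
  have hlog := Real.isLittleO_log_id_atTop.def hcK
  have h2 := Real.tendsto_log_atTop.eventually_ge_atTop (max 1 (K * s₀ / δ))
  obtain ⟨R₁, hR₁⟩ := ((hlog.and h2).and (eventually_ge_atTop 1)).exists_forall_of_atTop
  set R₀ : ℝ := max R₁ 1 with hR₀def
  have hR₀1 : (1:ℝ) ≤ R₀ := le_max_right _ _
  -- the constant
  set B : ℝ := max C₁ 0 * 2 ^ δ' * (X₁ * A * δ / K) ^ δ' * ε⁻¹ ^ δ' + 1 with hBdef
  refine ⟨max B (R₀ ^ δ), ?_⟩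
  intro n hn x hx
  set w : ℝ := ainv x with hwdef
  have hw1 : (1:ℝ) ≤ w := hainv_maps x hx
  have hw0 : (0:ℝ) < w := by linarith
  have hn1 : (1:ℝ) ≤ (n:ℝ) := by exact_mod_cast hn
  have hn0 : (0:ℝ) < (n:ℝ) := by linarith
  set R : ℝ := (n:ℝ) / w with hRdef
  have hR0 : (0:ℝ) < R := by positivity
  have hRw : R * w = (n:ℝ) := by rw [hRdef]; field_simp
  have hRpow : R ^ (-δ) = (w / n) ^ δ := by
    rw [Real.rpow_neg hR0.le, ← Real.inv_rpow hR0.le]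
    congr 1
    rw [hRdef, inv_div]
  have hpow0 : (0:ℝ) ≤ (w / n) ^ δ := by positivity
  by_cases hcase : R₀ ≤ R
  · -- main regime
    have hR1 : (1:ℝ) ≤ R := le_trans hR₀1 hcase
    have hRR₁ : R₁ ≤ R := le_trans (le_max_left _ _) hcase
    obtain ⟨⟨hlogR, hlogR2⟩, -⟩ := hR₁ R hRR₁
    set L : ℝ := Real.log R with hLdef
    have hL1 : (1:ℝ) ≤ L := le_trans (le_max_left _ _) hlogR2
    have hLs₀ : K * s₀ / δ ≤ L := le_trans (le_max_right _ _) hlogR2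
    have hL0 : (0:ℝ) < L := by linarith
    have hKR : δ * M * L ≤ K * R := by
      have h1 : ‖Real.log R‖ ≤ K / (δ * M) * ‖id R‖ := hlogR
      rw [Real.norm_eq_abs, Real.norm_eq_abs, id] at h1
      rw [abs_of_nonneg (by linarith : (0:ℝ) ≤ Real.log R),
        abs_of_nonneg hR0.le] at h1
      rw [div_mul_eq_mul_div, le_div_iff₀ (by positivity)] at h1
      rw [← hLdef] at h1
      calc δ * M * L = L * (δ * M) := by ring
      _ ≤ K * R := h1
    set t : ℝ := K * n / (δ * L) with htdef
    have ht0 : (0:ℝ) < t := by rw [htdef]; positivity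
    have hMwt : M * w ≤ t := by
      rw [htdef, le_div_iff₀ (by positivity)]
      have h5 : δ * M * L * w ≤ K * R * w := mul_le_mul_of_nonneg_right hKR hw0.le
      have hKn : K * R * w = K * (n:ℝ) := by rw [mul_assoc, hRw]
      calc M * w * (δ * L) = δ * M * L * w := by ring
      _ ≤ K * R * w := h5
      _ = K * (n:ℝ) := hKn
    have ht1 : (1:ℝ) ≤ t := le_trans (one_le_mul_of_one_le_of_one_le hM1 hw1) hMwt
    have htz₀ : ainv z₀ ≤ t :=
      le_trans (le_trans hMz₀ (le_mul_of_one_le_right hM0.le hw1)) hMwt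
    have htC₃w : C₃ * w ≤ t :=
      le_trans (mul_le_mul_of_nonneg_right hMC₃ hw0.le) hMwt
    have htX₁Aw : X₁ * A * w ≤ t :=
      le_trans (mul_le_mul_of_nonneg_right hMX₁A hw0.le) hMwt
    set z : ℝ := a t with hzdef
    have hz1 : (1:ℝ) ≤ z := ha_maps t ht1
    have hzt : ainv z = t := hainv_left t ht1
    have hzz₀ : z₀ ≤ z := by
      have := haMono (ainv z₀) t (hainv_maps z₀ hz₀) htz₀
      rwa [hainv_right z₀ hz₀] at this
    have hnt : (n:ℝ) / t = δ * L / K := by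
      rw [htdef]; field_simp
    have hns₀ : s₀ ≤ (n:ℝ) / ainv z := by
      rw [hzt, hnt, le_div_iff₀ hK]
      rw [div_le_iff₀ hδ0] at hLs₀
      linarith
    set x'' : ℝ := max x x₀ with hx''def
    have hx''₀ : x₀ ≤ x'' := le_max_right _ _
    have hxx'' : x ≤ x'' := le_max_left _ _
    have hx''1 : (1:ℝ) ≤ x'' := le_trans hx hxx''
    have hx''0 : (0:ℝ) < x'' := by linarith
    set u : ℝ := ainv x'' with hudef
    have hu1 : (1:ℝ) ≤ u := hainv_maps x'' hx''1
    have huAw : u ≤ A * w := by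
      rcases le_total x x₀ with h | h
      · have hmax : x'' = x₀ := max_eq_right h
        rw [hudef, hmax, ← hAdef]
        exact le_mul_of_one_le_right (by linarith) hw1
      · have hmax : x'' = x := max_eq_left h
        rw [hudef, hmax, ← hwdef]
        exact le_mul_of_one_le_left hw0.le hA1
    have hcx1 : (1:ℝ) ≤ c * x := one_le_mul_of_one_le_of_one_le hc1 hx
    have htcx : ainv (c * x) ≤ t := le_trans (hC₃ x hx) htC₃w
    have hzcx : c * x ≤ z := by
      have := haMono (ainv (c * x)) t (hainv_maps _ hcx1) htcx
      rwa [hainv_right _ hcx1] at this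
    set y : ℝ := z - x'' with hydef
    have hxy : x'' + y = z := by rw [hydef]; ring
    have hyr : r₀ ≤ y / x'' := by
      have hle : (1 + r₀) * x'' ≤ c * x := by
        have h1 : x'' ≤ x₀ * x := by
          apply max_le
          · exact le_mul_of_one_le_left (by linarith) hx₀
          · exact le_mul_of_one_le_right (by linarith) hx
        calc (1 + r₀) * x'' ≤ (1 + r₀) * (x₀ * x) :=
              mul_le_mul_of_nonneg_left h1 (by linarith)
        _ = c * x := by rw [hcdef]; ring
      rw [le_div_iff₀ hx''0, hydef]
      linarith only [hle, hzcx]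
    -- measure decomposition
    have hsub : {ω | -x ≤ walkMin ξ n ω} ⊆
        hitsAboveBeforeBelow ξ x'' y ∪ {ω | reflMax ξ n ω ≤ x'' + y} := by
      intro ω hω
      exact aux_incl ξ n x'' y (le_trans (neg_le_neg hxx'') hω)
    have hm1 : (P {ω | -x ≤ walkMin ξ n ω}).toReal ≤
        (P (hitsAboveBeforeBelow ξ x'' y)).toReal +
          (P {ω | reflMax ξ n ω ≤ x'' + y}).toReal := by
      have h1 : P {ω | -x ≤ walkMin ξ n ω} ≤
          P (hitsAboveBeforeBelow ξ x'' y) + P {ω | reflMax ξ n ω ≤ x'' + y} :=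
        le_trans (measure_mono hsub) (measure_union_le _ _)
      have h2 := ENNReal.toReal_mono
        (ENNReal.add_ne_top.2 ⟨measure_ne_top _ _, measure_ne_top _ _⟩) h1
      rwa [ENNReal.toReal_add (measure_ne_top _ _) (measure_ne_top _ _)] at h2
    -- bound the Λ part
    have hΛ1 := hΛ x'' y hx''₀ hyr
    rw [hxy, hzt] at hΛ1
    have hgt : 0 < g t := hg_pos t ht1
    have hgu : 0 < g u := hg_pos u hu1
    have hX₁u_t : X₁ * u ≤ t := by
      calc X₁ * u ≤ X₁ * (A * w) := mul_le_mul_of_nonneg_left huAw (by linarith)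
      _ = X₁ * A * w := by ring
      _ ≤ t := htX₁Aw
    have hgu_le : g u ≤ g (X₁ * u) :=
      hg_mono u (X₁ * u) hu1 (le_mul_of_one_le_left (by linarith) hX₁1)
    have hPot := hPotter (X₁ * u) t (le_mul_of_one_le_right (by linarith) hu1) hX₁u_t
    have hratio : g u / g t ≤ 2 ^ δ' * (X₁ * u / t) ^ δ' := by
      rw [div_le_iff₀ hgt]
      exact le_trans hgu_le hPot
    have hX₁0 : (0:ℝ) < X₁ := lt_of_lt_of_le one_pos hX₁1
    have hA0 : (0:ℝ) < A := lt_of_lt_of_le one_pos hA1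
    have hbase : X₁ * u / t ≤ X₁ * A * w / t := by
      have hnum : X₁ * u ≤ X₁ * A * w := by
        calc X₁ * u ≤ X₁ * (A * w) := mul_le_mul_of_nonneg_left huAw hX₁0.le
        _ = X₁ * A * w := by ring
      have := mul_le_mul_of_nonneg_right hnum (inv_nonneg.2 ht0.le)
      rwa [← div_eq_mul_inv, ← div_eq_mul_inv] at this
    have hu0 : (0:ℝ) < u := lt_of_lt_of_le one_pos hu1
    have hrpow2 : (X₁ * u / t) ^ δ' ≤ (X₁ * A * w / t) ^ δ' :=
      Real.rpow_le_rpow (by positivity) hbase hδ'0.le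
    have h2pos : (0:ℝ) < 2 ^ δ' := Real.rpow_pos_of_pos two_pos δ'
    have hΛ2 : C₁ * g u / g t ≤ max C₁ 0 * (2 ^ δ' * (X₁ * A * w / t) ^ δ') := by
      have e1 : C₁ * g u / g t = C₁ * (g u / g t) := by ring
      rw [e1]
      have r1 : g u / g t ≤ 2 ^ δ' * (X₁ * A * w / t) ^ δ' :=
        le_trans hratio (mul_le_mul_of_nonneg_left hrpow2 h2pos.le)
      have r2 : 0 ≤ g u / g t := by positivity
      calc C₁ * (g u / g t) ≤ max C₁ 0 * (g u / g t) :=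
            mul_le_mul_of_nonneg_right (le_max_left _ _) r2
      _ ≤ max C₁ 0 * (2 ^ δ' * (X₁ * A * w / t) ^ δ') :=
            mul_le_mul_of_nonneg_left r1 (le_max_right _ _)
    have hkeyq : X₁ * A * w / t = (X₁ * A * δ / K) * (L / R) := by
      rw [htdef, hRdef]
      field_simp
    have hLrpow : L ^ δ' ≤ ε⁻¹ ^ δ' * R ^ (δ' - δ) := by
      have h1 : L ≤ R ^ ε / ε := aux_logle ε R hε0 hR1
      have h2 : L ^ δ' ≤ (R ^ ε / ε) ^ δ' :=
        Real.rpow_le_rpow (by linarith) h1 hδ'0.le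
      have h3 : (R ^ ε / ε) ^ δ' = (R ^ ε) ^ δ' / ε ^ δ' :=
        Real.div_rpow (by positivity) hε0.le δ'
      have h4 : (R ^ ε) ^ δ' = R ^ (δ' - δ) := by
        rw [← Real.rpow_mul hR0.le, hεδ']
      have h5 : (0:ℝ) < ε ^ δ' := Real.rpow_pos_of_pos hε0 δ'
      have h6 : ε⁻¹ ^ δ' = (ε ^ δ')⁻¹ := Real.inv_rpow hε0.le δ'
      calc L ^ δ' ≤ (R ^ ε / ε) ^ δ' := h2
      _ = R ^ (δ' - δ) / ε ^ δ' := by rw [h3, h4]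
      _ = ε⁻¹ ^ δ' * R ^ (δ' - δ) := by rw [h6]; ring
    have hKXA0 : (0:ℝ) ≤ X₁ * A * δ / K := by positivity
    have hfrac : (X₁ * A * w / t) ^ δ' ≤
        (X₁ * A * δ / K) ^ δ' * (ε⁻¹ ^ δ' * R ^ (-δ)) := by
      rw [hkeyq, Real.mul_rpow hKXA0 (div_nonneg (by linarith) hR0.le),
        Real.div_rpow (by linarith : (0:ℝ) ≤ L) hR0.le]
      apply mul_le_mul_of_nonneg_left _ (Real.rpow_nonneg hKXA0 δ')
      have hRδ' : (0:ℝ) < R ^ δ' := Real.rpow_pos_of_pos hR0 δ'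
      rw [div_le_iff₀ hRδ']
      have he : R ^ (-δ) * R ^ δ' = R ^ (δ' - δ) := by
        rw [← Real.rpow_add hR0]; congr 1; ring
      calc L ^ δ' ≤ ε⁻¹ ^ δ' * R ^ (δ' - δ) := hLrpow
      _ = ε⁻¹ ^ δ' * R ^ (-δ) * R ^ δ' := by rw [mul_assoc, he]
    -- bound the V part
    have hV1 := hV z hzz₀ n hns₀
    rw [hzt] at hV1
    rw [show z = x'' + y from hxy.symm] at hV1
    have hexp : -K * (n:ℝ) / t = L * (-δ) := by
      rw [htdef]
      field_simp
    have hexp2 : Real.exp (-K * (n:ℝ) / t) = R ^ (-δ) := by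
      rw [hexp, Real.rpow_def_of_pos hR0, hLdef]
    have hRneg0 : (0:ℝ) ≤ R ^ (-δ) := (Real.rpow_pos_of_pos hR0 _).le
    -- combine
    calc (P {ω | -x ≤ walkMin ξ n ω}).toReal ≤
        (P (hitsAboveBeforeBelow ξ x'' y)).toReal +
          (P {ω | reflMax ξ n ω ≤ x'' + y}).toReal := hm1
    _ ≤ max C₁ 0 * (2 ^ δ' * (X₁ * A * w / t) ^ δ') + R ^ (-δ) :=
        add_le_add (le_trans hΛ1 hΛ2) (le_trans hV1 (le_of_eq hexp2))
    _ ≤ max C₁ 0 * (2 ^ δ' * ((X₁ * A * δ / K) ^ δ' * (ε⁻¹ ^ δ' * R ^ (-δ))))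
          + R ^ (-δ) := by
        apply add_le_add_left
        exact mul_le_mul_of_nonneg_left
          (mul_le_mul_of_nonneg_left hfrac h2pos.le) (le_max_right _ _)
    _ = B * R ^ (-δ) := by rw [hBdef]; ring
    _ ≤ max B (R₀ ^ δ) * R ^ (-δ) :=
        mul_le_mul_of_nonneg_right (le_max_left _ _) hRneg0
    _ = max B (R₀ ^ δ) * (w / n) ^ δ := by rw [hRpow]
  · -- small regime: R < R₀
    push_neg at hcase
    have h1 : (P {ω | -x ≤ walkMin ξ n ω}).toReal ≤ 1 := by
      have h0 := ENNReal.toReal_mono ENNReal.one_ne_top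
        (prob_le_one (μ := P) (s := {ω | -x ≤ walkMin ξ n ω}))
      rwa [ENNReal.toReal_one] at h0
    have h2 : (1:ℝ) ≤ R₀ ^ δ * (w / n) ^ δ := by
      rw [← hRpow]
      have h3 : R₀ ^ δ * R ^ (-δ) = (R₀ / R) ^ δ := by
        rw [Real.div_rpow (by linarith) hR0.le, Real.rpow_neg hR0.le, div_eq_mul_inv]
      rw [h3]
      have h4 : (1:ℝ) ≤ R₀ / R := (one_le_div hR0).2 hcase.le
      calc (1:ℝ) = 1 ^ δ := (Real.one_rpow δ).symm
      _ ≤ (R₀ / R) ^ δ := Real.rpow_le_rpow one_pos.le h4 hδ0.le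
    calc (P {ω | -x ≤ walkMin ξ n ω}).toReal ≤ 1 := h1
    _ ≤ R₀ ^ δ * (w / n) ^ δ := h2
    _ ≤ max B (R₀ ^ δ) * (w / n) ^ δ :=
        mul_le_mul_of_nonneg_right (le_max_right _ _) hpow0
end
end

section
/- For every real α with 1 < α ≤ 2 and every real q ≥ 0: (α−1)·∫₀¹ E_α(q·(1−x)^α)·x^{α−2} dx = Γ(α+1)·E_α′(q). -/
open Nat MeasureTheory Set

noncomputable section

lemma complex_eq_real_beta (a b : ℝ) :
    ∀ x ∈ Set.uIcc (0:ℝ) 1,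
      ((x:ℂ) ^ ((a:ℂ) - 1) * (1 - (x:ℂ)) ^ ((b:ℂ) - 1))
        = ((x ^ (a - 1) * (1 - x) ^ (b - 1) : ℝ) : ℂ) := by
  intro x hx
  rw [Set.uIcc_of_le zero_le_one] at hx
  push_cast
  rw [Complex.ofReal_cpow hx.1, Complex.ofReal_cpow (by linarith [hx.2])]
  push_cast
  ring

lemma real_betaIntegral {a b : ℝ} (ha : 0 < a) (hb : 0 < b) :
    ∫ x in (0:ℝ)..1, x ^ (a - 1) * (1 - x) ^ (b - 1)
      = Real.Gamma a * Real.Gamma b / Real.Gamma (a + b) := by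
  have key := Complex.Gamma_mul_Gamma_eq_betaIntegral (s := (a:ℂ)) (t := (b:ℂ))
    (by simpa using ha) (by simpa using hb)
  rw [Complex.betaIntegral] at key
  rw [intervalIntegral.integral_congr (complex_eq_real_beta a b)] at key
  rw [intervalIntegral.integral_ofReal] at key
  have hab : Real.Gamma (a + b) ≠ 0 := (Real.Gamma_pos_of_pos (by linarith)).ne'
  rw [← Complex.ofReal_add, Complex.Gamma_ofReal, Complex.Gamma_ofReal,
    Complex.Gamma_ofReal, ← Complex.ofReal_mul, ← Complex.ofReal_mul] at key
  have := Complex.ofReal_injective key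
  field_simp
  linarith [this]

lemma real_betaIntegrableOn {a b : ℝ} (ha : 0 < a) (hb : 0 < b) :
    IntegrableOn (fun x : ℝ => x ^ (a - 1) * (1 - x) ^ (b - 1)) (Set.Ioc 0 1) := by
  have hc := (Complex.betaIntegral_convergent (u := (a:ℂ)) (v := (b:ℂ))
    (by simpa using ha) (by simpa using hb)).1
  have hre := hc.re
  refine hre.congr ?_
  filter_upwards [ae_restrict_mem measurableSet_Ioc] with x hx
  rw [complex_eq_real_beta a b x (by rw [Set.uIcc_of_le zero_le_one]; exact ⟨hx.1.le, hx.2⟩)]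
  simp

lemma summable_aux {α q : ℝ} (hα : 1 < α) (hq : 0 ≤ q) :
    Summable (fun n : ℕ => q ^ n / Real.Gamma (α * n + α)) := by
  have hα0 : 0 < α - 1 := by linarith
  obtain ⟨N, hNle⟩ : ∃ N : ℕ, 1 / (α - 1) ≤ (N : ℝ) := exists_nat_ge _
  rw [← summable_nat_add_iff N]
  have hsum : Summable (fun n : ℕ => q ^ (n + N) / ((n + N)! : ℝ)) :=
    (summable_nat_add_iff N).mpr (Real.summable_pow_div_factorial q)
  refine Summable.of_nonneg_of_le (fun n => ?_) (fun n => ?_) hsum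
  · have : (0:ℝ) < Real.Gamma (α * (n + N : ℕ) + α) :=
      Real.Gamma_pos_of_pos (by positivity)
    positivity
  · have hmN : (N : ℝ) ≤ ((n + N : ℕ) : ℝ) := by exact_mod_cast Nat.le_add_left N n
    set m : ℕ := n + N with hm
    have h2 : (1:ℝ) ≤ (α - 1) * N := by
      rw [div_le_iff₀ hα0] at hNle; linarith [hNle]
    have h1 : (1:ℝ) ≤ (α - 1) * ((m : ℝ) + 1) := by nlinarith
    have harg : (m : ℝ) + 2 ≤ α * m + α := by nlinarith
    have hmono : ((m + 1)! : ℝ) ≤ Real.Gamma (α * m + α) := by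
      have h3 : ((m + 2 : ℕ) : ℝ) ∈ Set.Ici (2:ℝ) := by
        simp only [Set.mem_Ici]; push_cast; linarith [Nat.cast_nonneg (α := ℝ) m]
      have h4 : α * (m:ℝ) + α ∈ Set.Ici (2:ℝ) := by
        simp only [Set.mem_Ici]
        linarith [Nat.cast_nonneg (α := ℝ) m]
      have h5 : ((m + 2 : ℕ) : ℝ) ≤ α * m + α := by push_cast; linarith
      have := Real.Gamma_strictMonoOn_Ici.monotoneOn h3 h4 h5
      rwa [show ((m + 2 : ℕ) : ℝ) = ((m + 1 : ℕ) : ℝ) + 1 by push_cast; ring,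
        Real.Gamma_nat_eq_factorial] at this
    have hfm : ((m)! : ℝ) ≤ ((m + 1)! : ℝ) := by
      exact_mod_cast Nat.factorial_le (Nat.le_succ m)
    have hfm0 : (0:ℝ) < ((m)! : ℝ) := by exact_mod_cast Nat.factorial_pos m
    exact div_le_div_of_nonneg_left (by positivity) hfm0 (le_trans hfm hmono)

/-- The Mittag-Leffler function `E_α(x) = Σ_{n=0}^∞ xⁿ / Γ(αn+1)`. -/
def mittagLeffler (α x : ℝ) : ℝ :=
  ∑' n : ℕ, x ^ n / Real.Gamma (α * n + 1)

/-- The termwise derivative of the Mittag-Leffler function,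
`E_α′(x) = Σ_{n=1}^∞ n xⁿ⁻¹ / Γ(αn+1) = Σ_{n=0}^∞ (n+1) xⁿ / Γ(α(n+1)+1)`. -/
def mittagLefflerDeriv (α x : ℝ) : ℝ :=
  ∑' n : ℕ, (n + 1 : ℝ) * x ^ n / Real.Gamma (α * (n + 1) + 1)

/-- For `1 < α ≤ 2` and `q ≥ 0`:
`(α-1) ∫₀¹ E_α(q (1-x)^α) x^(α-2) dx = Γ(α+1) E_α′(q)`. -/
theorem mittagLeffler_integral_identity
    (α q : ℝ) (hα₁ : 1 < α) (hα₂ : α ≤ 2) (hq : 0 ≤ q) :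
    (α - 1) * ∫ x in (0 : ℝ)..1, mittagLeffler α (q * (1 - x) ^ α) * x ^ (α - 2)
      = Real.Gamma (α + 1) * mittagLefflerDeriv α q := by
  have hα0 : 0 < α := by linarith
  have hΓpos : ∀ c : ℝ, 0 < c → 0 < Real.Gamma c := fun c hc => Real.Gamma_pos_of_pos hc
  -- the common term
  set t : ℕ → ℝ := fun n => Real.Gamma α * q ^ n / Real.Gamma (α * n + α) with ht
  -- the integrand family
  set f : ℕ → ℝ → ℝ := fun n x =>
    q ^ n / Real.Gamma (α * n + 1) * (x ^ (α - 1 - 1) * (1 - x) ^ (α * n + 1 - 1)) with hf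
  -- positivity of Gamma args
  have hargpos : ∀ n : ℕ, (0:ℝ) < α * n + 1 := fun n => by positivity
  have hargpos2 : ∀ n : ℕ, (0:ℝ) < α * n + α := fun n => by positivity
  -- value of each term integral
  have hI : ∀ n : ℕ, ∫ x in Set.Ioc (0:ℝ) 1, f n x
      = Real.Gamma (α - 1) * q ^ n / Real.Gamma (α * n + α) := by
    intro n
    have hB := real_betaIntegral (a := α - 1) (b := α * n + 1) (by linarith) (hargpos n)
    rw [intervalIntegral.integral_of_le zero_le_one] at hB
    simp only [hf]
    rw [MeasureTheory.integral_const_mul, hB]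
    have h1 : α - 1 + (α * n + 1) = α * n + α := by ring
    rw [h1]
    field_simp
  -- integrability of each term
  have hint : ∀ n : ℕ, IntegrableOn (f n) (Set.Ioc (0:ℝ) 1) := by
    intro n
    exact (real_betaIntegrableOn (a := α - 1) (b := α * n + 1)
      (by linarith) (hargpos n)).const_mul _
  -- nonnegativity on the set
  have hnn : ∀ n : ℕ, ∀ x ∈ Set.Ioc (0:ℝ) 1, 0 ≤ f n x := by
    intro n x hx
    have h1 : (0:ℝ) ≤ x := hx.1.le
    have h2 : (0:ℝ) ≤ 1 - x := by linarith [hx.2]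
    have := (hΓpos _ (hargpos n)).le
    have := Real.rpow_nonneg h1 (α - 1 - 1)
    have := Real.rpow_nonneg h2 (α * n + 1 - 1)
    positivity
  -- pointwise expansion of the integrand
  have hpt : ∀ x ∈ Set.Ioc (0:ℝ) 1,
      mittagLeffler α (q * (1 - x) ^ α) * x ^ (α - 2) = ∑' n : ℕ, f n x := by
    intro x hx
    have h2 : (0:ℝ) ≤ 1 - x := by linarith [hx.2]
    rw [mittagLeffler, ← tsum_mul_right]
    refine tsum_congr fun n => ?_
    rw [mul_pow, ← Real.rpow_natCast ((1 - x) ^ α) n, ← Real.rpow_mul h2]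
    simp only [hf]
    have e1 : α - 1 - 1 = α - 2 := by ring
    have e2 : α * (n:ℝ) + 1 - 1 = α * n := by ring
    rw [e1, e2]
    ring
  -- rewrite the interval integral and interchange
  rw [intervalIntegral.integral_of_le zero_le_one]
  rw [MeasureTheory.setIntegral_congr_fun measurableSet_Ioc hpt]
  have hmeas : ∀ n : ℕ, AEStronglyMeasurable (f n)
      (MeasureTheory.volume.restrict (Set.Ioc (0:ℝ) 1)) := by
    intro n
    apply Measurable.aestronglyMeasurable
    fun_prop
  have hfin : ∑' n : ℕ, ∫⁻ x in Set.Ioc (0:ℝ) 1, ‖f n x‖₊ ≠ ⊤ := by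
    have heq : ∀ n : ℕ, (∫⁻ x in Set.Ioc (0:ℝ) 1, ‖f n x‖₊)
        = ENNReal.ofReal (Real.Gamma (α - 1) * q ^ n / Real.Gamma (α * n + α)) := by
      intro n
      have hae : 0 ≤ᵐ[MeasureTheory.volume.restrict (Set.Ioc (0:ℝ) 1)] f n := by
        filter_upwards [ae_restrict_mem measurableSet_Ioc] with x hx
        exact hnn n x hx
      rw [← hI n, MeasureTheory.ofReal_integral_eq_lintegral_ofReal (hint n) hae]
      apply MeasureTheory.lintegral_congr_ae
      filter_upwards [ae_restrict_mem measurableSet_Ioc] with x hx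
      rw [← Real.enorm_eq_ofReal (hnn n x hx)]
      rfl
    simp_rw [heq]
    have hsum : Summable (fun n : ℕ => Real.Gamma (α - 1) * q ^ n / Real.Gamma (α * n + α)) := by
      simpa [mul_div_assoc] using (summable_aux hα₁ hq).mul_left (Real.Gamma (α - 1))
    rw [← ENNReal.ofReal_tsum_of_nonneg (fun n => by
      have := (hΓpos _ (hargpos2 n)).le
      have := (hΓpos (α - 1) (by linarith)).le
      positivity) hsum]
    exact ENNReal.ofReal_ne_top
  rw [MeasureTheory.integral_tsum hmeas hfin]
  -- both sides equal ∑' t n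
  have hLHS : (α - 1) * ∑' n : ℕ, ∫ x in Set.Ioc (0:ℝ) 1, f n x = ∑' n : ℕ, t n := by
    rw [← tsum_mul_left]
    refine tsum_congr fun n => ?_
    rw [hI n, ht]
    have hg : Real.Gamma α = (α - 1) * Real.Gamma (α - 1) := by
      have := Real.Gamma_add_one (ne_of_gt (show (0:ℝ) < α - 1 by linarith))
      rw [show α - 1 + 1 = α by ring] at this
      exact this
    rw [hg]; ring
  rw [hLHS]
  -- RHS
  rw [mittagLefflerDeriv, ← tsum_mul_left]
  refine (tsum_congr fun n => ?_).symm
  have h1 : Real.Gamma (α + 1) = α * Real.Gamma α := Real.Gamma_add_one (ne_of_gt hα0)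
  have h2 : Real.Gamma (α * (n + 1) + 1) = (α * n + α) * Real.Gamma (α * n + α) := by
    rw [show α * ((n:ℝ) + 1) + 1 = (α * n + α) + 1 by ring]
    exact Real.Gamma_add_one (hargpos2 n).ne'
  rw [h1, h2, ht]
  have h3 := (hΓpos _ (hargpos2 n)).ne'
  have h4 := (hargpos2 n).ne'
  field_simp
end
end

section
/- For every real α with 1 < α ≤ 2 and every real q > 0: ∫₀¹ x^{α−1}·E_α′(q·x^α)·(1−x)^{α−2} dx = (Γ(α−1)/q)·(α·q·E_α″(q) + (α−1)·E_α′(q) − (α−1)/Γ(α+1)). -/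
noncomputable section

open MeasureTheory intervalIntegral Set

/-- The termwise second derivative of the Mittag-Leffler function,
`E_α″(x) = Σ_{n=2}^∞ n(n-1) xⁿ⁻² / Γ(αn+1) = Σ_{n=0}^∞ (n+2)(n+1) xⁿ / Γ(α(n+2)+1)`. -/
def mittagLefflerDeriv2 (α x : ℝ) : ℝ :=
  ∑' n : ℕ, (n + 2 : ℝ) * (n + 1 : ℝ) * x ^ n / Real.Gamma (α * (n + 2) + 1)

lemma fact_le_Gamma {n : ℕ} {x : ℝ} (h2 : (2:ℝ) ≤ (n:ℝ) + 1) (hx : (n:ℝ) + 1 ≤ x) :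
    (Nat.factorial n : ℝ) ≤ Real.Gamma x := by
  rw [← Real.Gamma_nat_eq_factorial]
  exact Real.Gamma_strictMonoOn_Ici.monotoneOn (by exact h2) (Set.mem_Ici.2 (h2.trans hx)) hx

lemma betaIntegrable {a b : ℝ} (ha : 0 < a) (hb : 0 < b) :
    MeasureTheory.IntegrableOn (fun x : ℝ => x ^ (a-1) * (1-x) ^ (b-1)) (Set.Ioc 0 1) := by
  have h := (Complex.betaIntegral_convergent (u := a) (v := b) (by simpa) (by simpa)).1
  have h2 := h.re
  refine h2.congr ?_
  filter_upwards [MeasureTheory.ae_restrict_mem measurableSet_Ioc] with x hx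
  have hx0 : (0:ℝ) ≤ x := hx.1.le
  have hx1 : (0:ℝ) ≤ 1 - x := by linarith [hx.2]
  have e1 : ((a:ℂ) - 1) = ((a-1 : ℝ) : ℂ) := by push_cast; ring
  have e2 : ((b:ℂ) - 1) = ((b-1 : ℝ) : ℂ) := by push_cast; ring
  have e3 : ((1:ℂ) - (x:ℂ)) = ((1-x : ℝ) : ℂ) := by push_cast; ring
  rw [e1, e2, e3, ← Complex.ofReal_cpow hx0, ← Complex.ofReal_cpow hx1,
    ← Complex.ofReal_mul]
  simp

lemma betaValue {a b : ℝ} (ha : 0 < a) (hb : 0 < b) :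
    ∫ x in (0:ℝ)..1, x ^ (a-1) * (1-x) ^ (b-1)
      = Real.Gamma a * Real.Gamma b / Real.Gamma (a+b) := by
  have key := Complex.Gamma_mul_Gamma_eq_betaIntegral (s := a) (t := b) (by simpa) (by simpa)
  have hbeta : Complex.betaIntegral a b
      = ((∫ x in (0:ℝ)..1, x ^ (a-1) * (1-x) ^ (b-1) : ℝ) : ℂ) := by
    rw [Complex.betaIntegral, ← intervalIntegral.integral_ofReal]
    refine intervalIntegral.integral_congr fun x hx => ?_
    rw [Set.uIcc_of_le (by norm_num : (0:ℝ) ≤ 1)] at hx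
    have hx0 : (0:ℝ) ≤ x := hx.1
    have hx1 : (0:ℝ) ≤ 1 - x := by linarith [hx.2]
    have e1 : ((a:ℂ) - 1) = ((a-1 : ℝ) : ℂ) := by push_cast; ring
    have e2 : ((b:ℂ) - 1) = ((b-1 : ℝ) : ℂ) := by push_cast; ring
    have e3 : ((1:ℂ) - (x:ℂ)) = ((1-x : ℝ) : ℂ) := by push_cast; ring
    rw [e1, e2, e3, ← Complex.ofReal_cpow hx0, ← Complex.ofReal_cpow hx1,
      ← Complex.ofReal_mul]
  rw [hbeta, ← Complex.ofReal_add, Complex.Gamma_ofReal, Complex.Gamma_ofReal,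
    Complex.Gamma_ofReal, ← Complex.ofReal_mul, ← Complex.ofReal_mul] at key
  have hkey := Complex.ofReal_injective key
  have hG : Real.Gamma (a+b) ≠ 0 := (Real.Gamma_pos_of_pos (by linarith)).ne'
  field_simp
  linarith [hkey]

/-- For `1 < α ≤ 2` and `q > 0`:
`∫₀¹ x^(α-1) E_α′(q x^α) (1-x)^(α-2) dx
  = (Γ(α-1)/q) (α q E_α″(q) + (α-1) E_α′(q) - (α-1)/Γ(α+1))`. -/
theorem mittagLefflerDeriv_integral_identity
    (α q : ℝ) (hα₁ : 1 < α) (hα₂ : α ≤ 2) (hq : 0 < q) :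
    ∫ x in (0 : ℝ)..1, x ^ (α - 1) * mittagLefflerDeriv α (q * x ^ α) * (1 - x) ^ (α - 2)
      = (Real.Gamma (α - 1) / q) *
          (α * q * mittagLefflerDeriv2 α q + (α - 1) * mittagLefflerDeriv α q
            - (α - 1) / Real.Gamma (α + 1)) := by
  have hα0 : (0:ℝ) < α := by linarith
  -- abbreviations
  set c : ℕ → ℝ := fun n => ((n:ℝ) + 1) * q ^ n / Real.Gamma (α * ((n:ℝ) + 1) + 1) with hc
  set f : ℕ → ℝ → ℝ :=
    fun n x => c n * (x ^ (α * ((n:ℝ) + 1) - 1) * (1 - x) ^ (α - 2)) with hf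
  set v : ℕ → ℝ := fun n =>
    Real.Gamma (α - 1) * q ^ n / (α * Real.Gamma (α * ((n:ℝ) + 2) - 1)) with hv
  -- Gamma positivity helpers
  have hG1 : ∀ n : ℕ, 0 < Real.Gamma (α * ((n:ℝ) + 1) + 1) := fun n =>
    Real.Gamma_pos_of_pos (by have : (0:ℝ) ≤ (n:ℝ) := n.cast_nonneg; nlinarith)
  have hG2 : ∀ n : ℕ, 0 < Real.Gamma (α * ((n:ℝ) + 2) + 1) := fun n =>
    Real.Gamma_pos_of_pos (by have : (0:ℝ) ≤ (n:ℝ) := n.cast_nonneg; nlinarith)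
  have hG3 : ∀ n : ℕ, 0 < Real.Gamma (α * ((n:ℝ) + 2) - 1) := fun n =>
    Real.Gamma_pos_of_pos (by have : (0:ℝ) ≤ (n:ℝ) := n.cast_nonneg; nlinarith)
  have hG4 : ∀ n : ℕ, 0 < Real.Gamma (α * ((n:ℝ) + 1)) := fun n =>
    Real.Gamma_pos_of_pos (by have : (0:ℝ) ≤ (n:ℝ) := n.cast_nonneg; nlinarith)
  have hGb : (0:ℝ) < Real.Gamma (α - 1) := Real.Gamma_pos_of_pos (by linarith)
  -- Gamma recurrences
  have hrec1 : ∀ n : ℕ, Real.Gamma (α * ((n:ℝ) + 1) + 1)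
      = α * ((n:ℝ) + 1) * Real.Gamma (α * ((n:ℝ) + 1)) := fun n =>
    Real.Gamma_add_one (by positivity)
  have hrec2 : ∀ n : ℕ, Real.Gamma (α * ((n:ℝ) + 2) + 1)
      = α * ((n:ℝ) + 2) * ((α * ((n:ℝ) + 2) - 1) * Real.Gamma (α * ((n:ℝ) + 2) - 1)) := by
    intro n
    have hpos : (0:ℝ) < α * ((n:ℝ) + 2) - 1 := by
      have : (0:ℝ) ≤ (n:ℝ) := n.cast_nonneg
      nlinarith
    have h1 : Real.Gamma (α * ((n:ℝ) + 2) + 1)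
        = α * ((n:ℝ) + 2) * Real.Gamma (α * ((n:ℝ) + 2)) :=
      Real.Gamma_add_one (by positivity)
    have h2 := Real.Gamma_add_one (s := α * ((n:ℝ) + 2) - 1) hpos.ne'
    rw [show α * ((n:ℝ) + 2) - 1 + 1 = α * ((n:ℝ) + 2) from by ring] at h2
    rw [h1, h2]
  -- summability of v
  have hsummable_aux : Summable (fun n : ℕ => q ^ n / (Nat.factorial n : ℝ)) := by
    simpa [div_eq_mul_inv] using Real.summable_pow_div_factorial q
  have hSv : Summable v := by
    refine Summable.of_norm_bounded_eventually_nat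
      (g := fun n => (Real.Gamma (α - 1) / α) * (q ^ n / (Nat.factorial n : ℝ)))
      (hsummable_aux.mul_left _) ?_
    filter_upwards [Filter.eventually_ge_atTop 1] with n hn
    have h2 : (2:ℝ) ≤ (n:ℝ) + 1 := by
      have : (1:ℝ) ≤ (n:ℝ) := by exact_mod_cast hn
      linarith
    have hfac : (Nat.factorial n : ℝ) ≤ Real.Gamma (α * ((n:ℝ) + 2) - 1) := by
      refine fact_le_Gamma h2 ?_
      have : (0:ℝ) ≤ (n:ℝ) := n.cast_nonneg
      nlinarith
    have hvn : v n = (Real.Gamma (α - 1) / α) * (q ^ n / Real.Gamma (α * ((n:ℝ) + 2) - 1)) := by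
      rw [hv]; ring
    rw [Real.norm_of_nonneg (by
      rw [hv]
      exact div_nonneg (by positivity) (mul_nonneg hα0.le (hG3 n).le)), hvn]
    have hfp : (0:ℝ) < (Nat.factorial n : ℝ) := by positivity
    gcongr
  -- summability of the E' series at q
  have hSA : Summable (fun n : ℕ => ((n:ℝ) + 1) * q ^ n / Real.Gamma (α * ((n:ℝ) + 1) + 1)) := by
    refine Summable.of_norm_bounded hsummable_aux ?_
    intro n
    have hfac : ((Nat.factorial (n+1) : ℕ) : ℝ) ≤ Real.Gamma (α * ((n:ℝ) + 1) + 1) := by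
      have := fact_le_Gamma (n := n+1) (x := α * ((n:ℝ) + 1) + 1) (by push_cast; linarith [(n.cast_nonneg : (0:ℝ) ≤ (n:ℝ))]) (by push_cast; nlinarith [(n.cast_nonneg : (0:ℝ) ≤ (n:ℝ))])
      exact this
    rw [Real.norm_of_nonneg (by positivity)]
    rw [div_le_div_iff₀ (hG1 n) (by positivity)]
    have : ((Nat.factorial (n+1) : ℕ) : ℝ) = ((n:ℝ)+1) * (Nat.factorial n : ℝ) := by
      rw [Nat.factorial_succ]; push_cast; ring
    calc ((n:ℝ) + 1) * q ^ n * (Nat.factorial n : ℝ)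
        = q ^ n * (((n:ℝ)+1) * (Nat.factorial n : ℝ)) := by ring
      _ = q ^ n * ((Nat.factorial (n+1) : ℕ) : ℝ) := by rw [this]
      _ ≤ q ^ n * Real.Gamma (α * ((n:ℝ) + 1) + 1) := by
          have : (0:ℝ) ≤ q ^ n := by positivity
          exact mul_le_mul_of_nonneg_left hfac this
  -- summability of the E'' series at q
  have hSB : Summable (fun n : ℕ =>
      ((n:ℝ) + 2) * ((n:ℝ) + 1) * q ^ n / Real.Gamma (α * ((n:ℝ) + 2) + 1)) := by
    refine Summable.of_norm_bounded hsummable_aux ?_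
    intro n
    have hfac : ((Nat.factorial (n+2) : ℕ) : ℝ) ≤ Real.Gamma (α * ((n:ℝ) + 2) + 1) := by
      have := fact_le_Gamma (n := n+2) (x := α * ((n:ℝ) + 2) + 1) (by push_cast; linarith [(n.cast_nonneg : (0:ℝ) ≤ (n:ℝ))]) (by push_cast; nlinarith [(n.cast_nonneg : (0:ℝ) ≤ (n:ℝ))])
      exact this
    rw [Real.norm_of_nonneg (by positivity)]
    rw [div_le_div_iff₀ (hG2 n) (by positivity)]
    have hfe : ((Nat.factorial (n+2) : ℕ) : ℝ)
        = ((n:ℝ)+2) * (((n:ℝ)+1) * (Nat.factorial n : ℝ)) := by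
      rw [Nat.factorial_succ, Nat.factorial_succ]; push_cast; ring
    calc ((n:ℝ) + 2) * ((n:ℝ) + 1) * q ^ n * (Nat.factorial n : ℝ)
        = q ^ n * (((n:ℝ)+2) * (((n:ℝ)+1) * (Nat.factorial n : ℝ))) := by ring
      _ = q ^ n * ((Nat.factorial (n+2) : ℕ) : ℝ) := by rw [hfe]
      _ ≤ q ^ n * Real.Gamma (α * ((n:ℝ) + 2) + 1) := by
          have : (0:ℝ) ≤ q ^ n := by positivity
          exact mul_le_mul_of_nonneg_left hfac this
    -- the common value of both sides: `∑' n, v n`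
  have hle : (0:ℝ) ≤ 1 := by norm_num
  have hInt : ∀ n : ℕ, MeasureTheory.Integrable (f n) (volume.restrict (Set.Ioc 0 1)) := by
    intro n
    have hb := betaIntegrable (a := α * ((n:ℝ) + 1)) (b := α - 1)
      (by have : (0:ℝ) ≤ (n:ℝ) := n.cast_nonneg; nlinarith) (by linarith)
    simp only [show α - 1 - 1 = α - 2 from by ring] at hb
    exact hb.const_mul (c n)
  have hval : ∀ n : ℕ, ∫ x in Set.Ioc (0:ℝ) 1, f n x = v n := by
    intro n
    rw [hf]
    rw [← intervalIntegral.integral_of_le hle, intervalIntegral.integral_const_mul]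
    have hbv := betaValue (a := α * ((n:ℝ) + 1)) (b := α - 1)
      (by have : (0:ℝ) ≤ (n:ℝ) := n.cast_nonneg; nlinarith) (by linarith)
    simp only [show α - 1 - 1 = α - 2 from by ring] at hbv
    rw [hbv, show α * ((n:ℝ) + 1) + (α - 1) = α * ((n:ℝ) + 2) - 1 from by ring]
    simp only [hc, hv]
    rw [hrec1 n]
    have h1 := (hG4 n).ne'
    have h2 := (hG3 n).ne'
    have h3 : ((n:ℝ) + 1) ≠ 0 := by positivity
    field_simp
  have hNormEq : ∀ n : ℕ, (∫ x in Set.Ioc (0:ℝ) 1, ‖f n x‖) = v n := by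
    intro n
    rw [← hval n]
    refine MeasureTheory.setIntegral_congr_fun measurableSet_Ioc fun x hx => ?_
    have hx0 : (0:ℝ) < x := hx.1
    have hx1 : (0:ℝ) ≤ 1 - x := by linarith [hx.2]
    have hcn : 0 ≤ c n := by
      rw [hc]
      exact div_nonneg (by positivity) (hG1 n).le
    exact Real.norm_of_nonneg (by
      refine mul_nonneg hcn (mul_nonneg ?_ ?_) <;> exact Real.rpow_nonneg (by linarith) _)
  have hNorm : Summable fun n : ℕ => ∫ x in Set.Ioc (0:ℝ) 1, ‖f n x‖ :=
    hSv.congr fun n => (hNormEq n).symm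
  have hpt : Set.EqOn
      (fun x : ℝ => x ^ (α - 1) * mittagLefflerDeriv α (q * x ^ α) * (1 - x) ^ (α - 2))
      (fun x : ℝ => ∑' n : ℕ, f n x) (Set.Ioc 0 1) := by
    intro x hx
    have hx0 : (0:ℝ) < x := hx.1
    simp only [mittagLefflerDeriv]
    rw [mul_comm (x ^ (α - 1)) _, mul_assoc, ← tsum_mul_right]
    refine tsum_congr fun n => ?_
    have hxp : x ^ (α * ((n:ℝ) + 1) - 1) = x ^ (α - 1) * (x ^ α) ^ n := by
      rw [← Real.rpow_natCast (x ^ α) n, ← Real.rpow_mul hx0.le, ← Real.rpow_add hx0]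
      ring_nf
    simp only [hf, hc]
    rw [hxp, mul_pow]
    ring
  have hL : (∫ x in (0:ℝ)..1,
      x ^ (α - 1) * mittagLefflerDeriv α (q * x ^ α) * (1 - x) ^ (α - 2)) = ∑' n : ℕ, v n := by
    rw [intervalIntegral.integral_of_le hle,
      MeasureTheory.setIntegral_congr_fun measurableSet_Ioc hpt,
      ← MeasureTheory.integral_tsum_of_summable_integral_norm hInt hNorm]
    exact tsum_congr hval
  -- now the right-hand side
  have hA0 : mittagLefflerDeriv α q = 1 / Real.Gamma (α + 1)
      + ∑' n : ℕ, (((n:ℝ) + 2) * q ^ (n+1) / Real.Gamma (α * ((n:ℝ) + 2) + 1)) := by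
    rw [mittagLefflerDeriv, hSA.tsum_eq_zero_add]
    congr 1
    · norm_num
    · refine tsum_congr fun n => ?_
      push_cast
      rw [show ((n:ℝ) + 1 + 1) = (n:ℝ) + 2 from by ring]
  have hS : Summable (fun n : ℕ =>
      ((n:ℝ) + 2) * q ^ (n+1) / Real.Gamma (α * ((n:ℝ) + 2) + 1)) := by
    refine ((summable_nat_add_iff 1).2 hSA).congr fun n => ?_
    push_cast
    rw [show ((n:ℝ) + 1 + 1) = (n:ℝ) + 2 from by ring]
  have hR : (Real.Gamma (α - 1) / q) *
      (α * q * mittagLefflerDeriv2 α q + (α - 1) * mittagLefflerDeriv α q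
        - (α - 1) / Real.Gamma (α + 1)) = ∑' n : ℕ, v n := by
    rw [mittagLefflerDeriv2, hA0]
    rw [show Real.Gamma (α - 1) / q *
        (α * q * (∑' n : ℕ, ((n:ℝ) + 2) * ((n:ℝ) + 1) * q ^ n / Real.Gamma (α * ((n:ℝ) + 2) + 1))
          + (α - 1) * (1 / Real.Gamma (α + 1)
            + ∑' n : ℕ, ((n:ℝ) + 2) * q ^ (n+1) / Real.Gamma (α * ((n:ℝ) + 2) + 1))
          - (α - 1) / Real.Gamma (α + 1))
      = Real.Gamma (α - 1) / q *
        ((α * q) * (∑' n : ℕ, ((n:ℝ) + 2) * ((n:ℝ) + 1) * q ^ n / Real.Gamma (α * ((n:ℝ) + 2) + 1))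
          + (α - 1) * (∑' n : ℕ, ((n:ℝ) + 2) * q ^ (n+1) / Real.Gamma (α * ((n:ℝ) + 2) + 1)))
      from by ring]
    rw [← tsum_mul_left, ← tsum_mul_left, ← Summable.tsum_add (hSB.mul_left _) (hS.mul_left _),
      ← tsum_mul_left]
    refine tsum_congr fun n => ?_
    rw [hv, hrec2 n]
    have h2 := (hG3 n).ne'
    have h3 : ((n:ℝ) + 2) ≠ 0 := by positivity
    have h4 : α * ((n:ℝ) + 2) - 1 ≠ 0 := by
      have : (0:ℝ) ≤ (n:ℝ) := n.cast_nonneg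
      nlinarith
    field_simp
    ring
  rw [hL, hR]
end
end
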